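/- Let q = 2^m and let B = {u_1,...,u_7} be a 7-subset of U_{q+1}. If a ∈ U_{q+1} satisfies σ_{7,3}(B) + a·σ_{7,2}(B) + a²·σ_{7,1}(B) + a³ = 0, then a ∈ B. -/

import Mathlib

open Finset

/-- The `l`-th elementary symmetric polynomial evaluated on a finite set `B`. -/
noncomputable def esym {F : Type*} [CommRing F] (B : Finset F) (l : ℕ) : F :=
  ∑ s ∈ B.powersetCard l, ∏ x ∈ s, x

/-- The set of `n`-th roots of unity. -/
def rootsSet (F : Type*) [Monoid F] (n : ℕ) : Set F := {u | u ^ n = 1}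

theorem stmt4 (m : ℕ) (hm : 1 ≤ m)
    (B : Finset (GaloisField 2 (2 * m)))
    (hBU : ↑B ⊆ rootsSet (GaloisField 2 (2 * m)) (2 ^ m + 1))
    (hB : B.card = 7)
    (a : GaloisField 2 (2 * m))
    (ha : a ∈ rootsSet (GaloisField 2 (2 * m)) (2 ^ m + 1))
    (heq : esym B 3 + a * esym B 2 + a ^ 2 * esym B 1 + a ^ 3 = 0) :
    a ∈ B := by
  classical
  set q : ℕ := 2 ^ m with hq
  have hunit : ∀ x : GaloisField 2 (2 * m),
      x ∈ rootsSet (GaloisField 2 (2 * m)) (q + 1) → x * x ^ q = 1 := by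
    intro x hx
    have h : x ^ (q + 1) = 1 := hx
    rw [pow_succ] at h
    linear_combination h
  have hat : a * a ^ q = 1 := hunit a ha
  set φ : GaloisField 2 (2 * m) →+* GaloisField 2 (2 * m) :=
    iterateFrobenius (GaloisField 2 (2 * m)) 2 m with hφ
  have hφx : ∀ x : GaloisField 2 (2 * m), φ x = x ^ q := fun x => iterateFrobenius_def 2 m x
  set P : GaloisField 2 (2 * m) := ∏ x ∈ B, x with hP
  have hcompl : ∀ l : ℕ, l ≤ 7 → P * (esym B l) ^ q = esym B (7 - l) := by
    intro l hl
    have h1 : (esym B l) ^ q = ∑ s ∈ B.powersetCard l, ∏ x ∈ s, x ^ q := by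
      rw [← hφx, esym, map_sum]
      refine sum_congr rfl fun s hs => ?_
      rw [map_prod]
      exact prod_congr rfl fun x _ => hφx x
    rw [h1, mul_sum, esym]
    refine sum_nbij' (fun s => B \ s) (fun t => B \ t) ?_ ?_ ?_ ?_ ?_
    · intro s hs
      rw [mem_powersetCard] at hs ⊢
      exact ⟨sdiff_subset, by rw [card_sdiff_of_subset hs.1, hB, hs.2]⟩
    · intro t ht
      rw [mem_powersetCard] at ht ⊢
      refine ⟨sdiff_subset, ?_⟩
      rw [card_sdiff_of_subset ht.1, hB, ht.2]
      omega
    · intro s hs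
      rw [mem_powersetCard] at hs
      exact Finset.sdiff_sdiff_eq_self hs.1
    · intro t ht
      rw [mem_powersetCard] at ht
      exact Finset.sdiff_sdiff_eq_self ht.1
    · intro s hs
      rw [mem_powersetCard] at hs
      have hPsplit : P = (∏ x ∈ B \ s, x) * ∏ x ∈ s, x := (prod_sdiff hs.1).symm
      have hone : (∏ x ∈ s, x) * ∏ x ∈ s, x ^ q = 1 := by
        rw [← prod_mul_distrib]
        refine prod_eq_one fun x hx => hunit x (hBU (hs.1 hx))
      rw [hPsplit, mul_assoc, hone, mul_one]
  have h2 : esym B 3 ^ q + a ^ q * esym B 2 ^ q + (a ^ q) ^ 2 * esym B 1 ^ q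
      + (a ^ q) ^ 3 = 0 := by
    have hc := congrArg φ heq
    simp only [map_add, map_mul, map_pow, map_zero] at hc
    simpa only [hφx] using hc
  have hesym0 : esym B 0 = 1 := by
    rw [esym, powersetCard_zero, sum_singleton, prod_empty]
  have hesym7 : esym B 7 = P := by
    rw [esym, ← hB, powersetCard_self, sum_singleton, hP]
  have hprod : ∏ b ∈ B, (b + a) = 0 := by
    have e1 : ∏ b ∈ B, (b + a) =
        ∑ t ∈ B.powerset, (∏ x ∈ t, x) * ∏ _x ∈ B \ t, a := prod_add _ _ _
    have e2 : ∑ t ∈ B.powerset, (∏ x ∈ t, x) * ∏ _x ∈ B \ t, a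
        = ∑ j ∈ range 8, esym B j * a ^ (7 - j) := by
      rw [powerset_card_biUnion, sum_biUnion (fun i _ j _ hij => pairwise_disjoint_powersetCard B hij), hB]
      refine sum_congr rfl fun j hj => ?_
      rw [esym, sum_mul]
      refine sum_congr rfl fun s hs => ?_
      rw [mem_powersetCard] at hs
      rw [prod_const, card_sdiff_of_subset hs.1, hB, hs.2]
    rw [e1, e2]
    have h4 := hcompl 3 (by norm_num)
    have h5 := hcompl 2 (by norm_num)
    have h6 := hcompl 1 (by norm_num)
    norm_num at h4 h5 h6
    simp only [sum_range_succ, range_zero, sum_empty, hesym0, hesym7]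
    norm_num
    rw [← h4, ← h5, ← h6]
    linear_combination (a ^ 4) * heq + P * a ^ 3 * h2 -
      (P * (esym B 2) ^ q * a ^ 2 + P * (esym B 1) ^ q * a * (a * a ^ q + 1) +
        P * ((a * a ^ q) ^ 2 + a * a ^ q + 1)) * hat
  obtain ⟨b, hb, hba⟩ := prod_eq_zero_iff.mp hprod
  have hab : a = -b := by linear_combination hba
  rw [hab, CharTwo.neg_eq]
  exact hb
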